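/- For all positive integers r and e, the number of pure O-sequences of codimension r, socle degree e and type 1 equals the number p_r(e) of partitions of the integer e into exactly r positive parts. -/

import Mathlib

/-- The degree of a monomial, given by its exponent vector. -/
def monDeg {r : ℕ} (M : Fin r → ℕ) : ℕ := ∑ j, M j

/-- `X` is a (monomial) order ideal: a nonempty finite set of monomials (exponent vectors)
closed under divisibility. -/
def IsOrderIdeal {r : ℕ} (X : Finset (Fin r → ℕ)) : Prop :=
  X.Nonempty ∧ ∀ M ∈ X, ∀ N : Fin r → ℕ, (∀ j, N j ≤ M j) → N ∈ X

/-- `M` is a maximal monomial of `X` with respect to divisibility. -/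
def IsMaxMon {r : ℕ} (X : Finset (Fin r → ℕ)) (M : Fin r → ℕ) : Prop :=
  M ∈ X ∧ ∀ N ∈ X, (∀ j, M j ≤ N j) → N = M

/-- `X` is a pure order ideal with socle degree `e`: it is an order ideal whose maximal
degree is `e` and all of whose maximal monomials have degree `e`. -/
def IsPureWithSocle {r : ℕ} (X : Finset (Fin r → ℕ)) (e : ℕ) : Prop :=
  IsOrderIdeal X ∧ (∀ M ∈ X, monDeg M ≤ e) ∧ (∃ M ∈ X, monDeg M = e) ∧
    ∀ M, IsMaxMon X M → monDeg M = e

/-- `h` agrees in degrees `≤ e` with the h-vector of `X`. -/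
def HasHVector {r : ℕ} (X : Finset (Fin r → ℕ)) (h : ℕ → ℕ) (e : ℕ) : Prop :=
  ∀ i ≤ e, h i = (X.filter fun M => monDeg M = i).card

/-- `h` is (in degrees `≤ e`) a pure O-sequence of socle degree `e`. -/
def IsPureOSeq (h : ℕ → ℕ) (e : ℕ) : Prop :=
  ∃ (r : ℕ) (X : Finset (Fin r → ℕ)), IsPureWithSocle X e ∧ HasHVector X h e

/-- `h` is a pure O-sequence of socle degree `e` and type `t`. -/
def IsPureOSeqOfType (h : ℕ → ℕ) (e t : ℕ) : Prop :=
  ∃ (r : ℕ) (X : Finset (Fin r → ℕ)), IsPureWithSocle X e ∧ HasHVector X h e ∧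
    {M : Fin r → ℕ | IsMaxMon X M}.ncard = t

/-- `((n)_(d))_1^1`, computed from the `d`-binomial (Macaulay) expansion of `n`
obtained greedily; by convention `((0)_(d))_1^1 = 0`. -/
def macaulayBound : ℕ → ℕ → ℕ
  | 0, _ => 0
  | (n+1), d =>
      Nat.choose (Nat.findGreatest (fun k => Nat.choose k d ≤ n + 1) (n + 1 + d) + 1) (d + 1) +
        macaulayBound
          ((n + 1) - Nat.choose (Nat.findGreatest (fun k => Nat.choose k d ≤ n + 1) (n + 1 + d)) d)
          (d - 1)
  termination_by n d => n
  decreasing_by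
    have hd : d ≤ Nat.findGreatest (fun k => Nat.choose k d ≤ n + 1) (n + 1 + d) :=
      Nat.le_findGreatest (by omega) (by simp [Nat.choose_self])
    have hpos := Nat.choose_pos hd
    omega

/-- `g` satisfies Macaulay's bound (in degrees `1 ≤ i ≤ e - 1`). -/
def SatisfiesMacaulay (g : ℕ → ℕ) (e : ℕ) : Prop :=
  ∀ i, 1 ≤ i → i + 1 ≤ e → g (i + 1) ≤ macaulayBound (g i) i

/-- `h` is an O-sequence of socle degree `e`. -/
def IsOSeq (h : ℕ → ℕ) (e : ℕ) : Prop :=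
  h 0 = 1 ∧ (∀ i ≤ e, 0 < h i) ∧ SatisfiesMacaulay h e

/-- `h` is differentiable: its first difference `(1, h 1 - h 0, …, h e - h (e-1))`
consists of nonnegative integers and satisfies Macaulay's bound. -/
def IsDifferentiable (h : ℕ → ℕ) (e : ℕ) : Prop :=
  h 0 = 1 ∧ (∀ i, 1 ≤ i → i ≤ e → h (i - 1) ≤ h i) ∧
    SatisfiesMacaulay (fun i => if i = 0 then 1 else h i - h (i - 1)) e



/-- counting function of divisors of `M` by degree -/
def cntFn {r : ℕ} (M : Fin r → ℕ) : ℕ → ℕ :=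
  fun i => ((Finset.Iic M).filter fun a => monDeg a = i).card

def stepFn (l : ℕ) (f : ℕ → ℕ) : ℕ → ℕ :=
  fun i => ∑ k ∈ Finset.range (l + 1), if k ≤ i then f (i - k) else 0

def hseq (L : List ℕ) : ℕ → ℕ :=
  L.foldr stepFn (fun i => if i = 0 then 1 else 0)

lemma hseq_cons (l : ℕ) (L : List ℕ) : hseq (l :: L) = stepFn l (hseq L) := rfl

lemma stepFn_inner (l' : ℕ) (f : ℕ → ℕ) (i k : ℕ) :
    (if k ≤ i then stepFn l' f (i - k) else 0)
      = ∑ k' ∈ Finset.range (l' + 1), if k + k' ≤ i then f (i - k - k') else 0 := by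
  unfold stepFn
  split
  · apply Finset.sum_congr rfl
    intro k' _
    have h : k' ≤ i - k ↔ k + k' ≤ i := by omega
    have h2 : i - k - k' = i - k - k' := rfl
    by_cases hc : k + k' ≤ i
    · rw [if_pos (h.mpr hc), if_pos hc]
    · rw [if_neg (fun hh => hc (h.mp hh)), if_neg hc]
  · rw [eq_comm]
    apply Finset.sum_eq_zero
    intro k' _
    have : ¬ (k + k' ≤ i) := by omega
    rw [if_neg this]

lemma stepFn_comm (l l' : ℕ) (f : ℕ → ℕ) :
    stepFn l (stepFn l' f) = stepFn l' (stepFn l f) := by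
  funext i
  show (∑ k ∈ Finset.range (l + 1), if k ≤ i then stepFn l' f (i - k) else 0)
      = (∑ k' ∈ Finset.range (l' + 1), if k' ≤ i then stepFn l f (i - k') else 0)
  rw [Finset.sum_congr rfl (fun k _ => stepFn_inner l' f i k),
      Finset.sum_congr rfl (fun k _ => stepFn_inner l f i k),
      Finset.sum_comm]
  apply Finset.sum_congr rfl; intro k' _
  apply Finset.sum_congr rfl; intro k _
  have h1 : k + k' ≤ i ↔ k' + k ≤ i := by omega
  have h2 : i - k - k' = i - k' - k := by omega
  rw [h2]
  by_cases hc : k' + k ≤ i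
  · rw [if_pos (h1.mpr hc), if_pos hc]
  · rw [if_neg (fun hh => hc (h1.mp hh)), if_neg hc]

lemma hseq_perm {L₁ L₂ : List ℕ} (h : L₁.Perm L₂) : hseq L₁ = hseq L₂ :=
  @List.Perm.foldr_eq _ _ stepFn _ _ ⟨stepFn_comm⟩ h _

lemma stepFn_zero (f : ℕ → ℕ) : stepFn 0 f = f := by
  funext i
  show (∑ k ∈ Finset.range 1, if k ≤ i then f (i - k) else 0) = f i
  rw [Finset.sum_range_one, if_pos (Nat.zero_le i), Nat.sub_zero]

lemma hseq_filter (L : List ℕ) : hseq L = hseq (L.filter (fun x => decide (x ≠ 0))) := by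
  induction L with
  | nil => rfl
  | cons a L ih =>
    by_cases ha : a = 0
    · subst ha
      rw [List.filter_cons_of_neg (by simp), hseq_cons, stepFn_zero, ih]
    · rw [List.filter_cons_of_pos (by simpa using ha), hseq_cons, hseq_cons, ih]


lemma cntFn_zero (M : Fin 0 → ℕ) : cntFn M = hseq [] := by
  funext i
  show ((Finset.Iic M).filter fun a => monDeg a = i).card = if i = 0 then 1 else 0
  have hIic : Finset.Iic M = {M} := by
    ext a
    simp [Finset.mem_Iic, Subsingleton.elim a M]
  have hdeg : monDeg M = 0 := by simp [monDeg]
  rw [hIic, Finset.filter_singleton]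
  rcases eq_or_ne i 0 with h | h
  · subst h; rw [if_pos hdeg, if_pos rfl, Finset.card_singleton]
  · rw [if_neg (by omega), if_neg h, Finset.card_empty]

lemma cntFn_succ {r : ℕ} (M : Fin (r + 1) → ℕ) :
    cntFn M = stepFn (M 0) (cntFn (fun j => M j.succ)) := by
  classical
  funext i
  show ((Finset.Iic M).filter fun a => monDeg a = i).card
      = ∑ k ∈ Finset.range (M 0 + 1), if k ≤ i then cntFn (fun j => M j.succ) (i - k) else 0
  rw [Finset.card_eq_sum_card_fiberwise (f := fun a => a 0) (t := Finset.range (M 0 + 1))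
    (fun a ha => by
      simp only [Finset.mem_coe, Finset.mem_filter, Finset.mem_Iic] at ha
      exact Finset.mem_range.2 (Nat.lt_succ_of_le (ha.1 0)))]
  apply Finset.sum_congr rfl
  intro k hk
  have hkM : k ≤ M 0 := Nat.lt_succ_iff.mp (Finset.mem_range.1 hk)
  by_cases hki : k ≤ i
  · rw [if_pos hki]
    apply Finset.card_bij (fun a _ => fun j : Fin r => a j.succ)
    · intro a ha
      simp only [Finset.mem_filter, Finset.mem_Iic] at ha ⊢
      obtain ⟨⟨hle, hdeg⟩, h0⟩ := ha
      refine ⟨fun j => hle j.succ, ?_⟩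
      have hsum : monDeg a = a 0 + ∑ j : Fin r, a j.succ := Fin.sum_univ_succ a
      show (∑ j : Fin r, a j.succ) = i - k
      omega
    · intro a₁ ha₁ a₂ ha₂ heq
      simp only [Finset.mem_filter, Finset.mem_Iic] at ha₁ ha₂
      funext j
      refine Fin.cases ?_ ?_ j
      · rw [ha₁.2, ha₂.2]
      · intro j'; exact congrFun heq j'
    · intro b hb
      simp only [Finset.mem_filter, Finset.mem_Iic] at hb
      refine ⟨Fin.cons k b, ?_, ?_⟩
      · simp only [Finset.mem_filter, Finset.mem_Iic]
        refine ⟨⟨?_, ?_⟩, ?_⟩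
        · intro j
          refine Fin.cases ?_ ?_ j
          · simpa using hkM
          · intro j'; simpa using hb.1 j'
        · show monDeg (Fin.cons k b) = i
          have hsum : monDeg (Fin.cons k b) = k + ∑ j : Fin r, b j := by
            unfold monDeg
            rw [Fin.sum_univ_succ]
            simp
          have : monDeg b = i - k := hb.2
          unfold monDeg at this
          omega
        · simp
      · funext j; simp
  · rw [if_neg hki, Finset.card_eq_zero, Finset.filter_eq_empty_iff]
    intro a ha
    simp only [Finset.mem_filter, Finset.mem_Iic] at ha
    intro h0
    have : a 0 ≤ monDeg a := Finset.single_le_sum (fun j _ => Nat.zero_le _) (Finset.mem_univ 0)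
    omega

lemma cntFn_eq_hseq : ∀ {r : ℕ} (M : Fin r → ℕ), cntFn M = hseq (List.ofFn M)
  | 0, M => by rw [List.ofFn_zero]; exact cntFn_zero M
  | (r + 1), M => by
      rw [List.ofFn_succ, cntFn_succ, hseq_cons, cntFn_eq_hseq (fun j => M j.succ)]


lemma monDeg_single {r : ℕ} (j : Fin r) (k : ℕ) : monDeg (Pi.single j k) = k := by
  unfold monDeg
  simp [Pi.single_apply, Finset.sum_ite_eq']

lemma monDeg_le_monDeg {r : ℕ} {a M : Fin r → ℕ} (h : ∀ j, a j ≤ M j) :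
    monDeg a ≤ monDeg M := Finset.sum_le_sum fun j _ => h j

lemma eq_of_le_of_deg_ge {r : ℕ} {a M : Fin r → ℕ} (h : ∀ j, a j ≤ M j)
    (hd : monDeg M ≤ monDeg a) : a = M := by
  by_contra hne
  have hne' : ∃ j, a j ≠ M j := by
    by_contra hall
    push_neg at hall
    exact hne (funext hall)
  obtain ⟨j, hj⟩ := hne'
  have : monDeg a < monDeg M :=
    Finset.sum_lt_sum (fun j _ => h j) ⟨j, Finset.mem_univ j, lt_of_le_of_ne (h j) hj⟩
  omega

lemma eq_single_of_deg_le {r : ℕ} {a : Fin r → ℕ} {j : Fin r} (h : monDeg a ≤ a j) :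
    a = Pi.single j (a j) := by
  have herase : ∑ x ∈ Finset.univ.erase j, a x = 0 := by
    have := Finset.add_sum_erase Finset.univ a (Finset.mem_univ j)
    unfold monDeg at h
    omega
  funext j'
  rcases eq_or_ne j' j with rfl | hne
  · simp
  · rw [Pi.single_eq_of_ne hne]
    exact Finset.sum_eq_zero_iff.mp herase j' (Finset.mem_erase.2 ⟨hne, Finset.mem_univ j'⟩)

lemma cntFn_one {r : ℕ} (M : Fin r → ℕ) :
    cntFn M 1 = (Finset.univ.filter fun j => 1 ≤ M j).card := by
  rw [eq_comm]
  apply Finset.card_bij (fun j _ => Pi.single j 1)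
  · intro j hj
    simp only [Finset.mem_filter, Finset.mem_univ, true_and] at hj
    simp only [Finset.mem_filter, Finset.mem_Iic]
    refine ⟨?_, monDeg_single j 1⟩
    intro j'
    rcases eq_or_ne j' j with rfl | hne
    · simpa using hj
    · rw [Pi.single_eq_of_ne hne]; exact Nat.zero_le _
  · intro j₁ _ j₂ _ heq
    by_contra hne
    have := congrFun heq j₁
    rw [Pi.single_eq_same, Pi.single_eq_of_ne hne] at this
    exact one_ne_zero this
  · intro a ha
    simp only [Finset.mem_filter, Finset.mem_Iic] at ha
    obtain ⟨hle, hdeg⟩ := ha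
    have hex : ∃ j, a j ≠ 0 := by
      by_contra hall
      push_neg at hall
      have : monDeg a = 0 := Finset.sum_eq_zero fun j _ => hall j
      omega
    obtain ⟨j, hj⟩ := hex
    have h1 : a j ≤ monDeg a :=
      Finset.single_le_sum (fun i _ => Nat.zero_le _) (Finset.mem_univ j)
    have haj : a j = 1 := by omega
    have := eq_single_of_deg_le (a := a) (j := j) (by omega)
    rw [haj] at this
    exact ⟨j, Finset.mem_filter.2 ⟨Finset.mem_univ j, by rw [← haj]; exact hle j⟩, this.symm⟩

lemma cntFn_vanish {r : ℕ} (M : Fin r → ℕ) {i : ℕ} (hi : monDeg M < i) : cntFn M i = 0 := by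
  rw [cntFn, Finset.card_eq_zero, Finset.filter_eq_empty_iff]
  intro a ha
  have := monDeg_le_monDeg (fun j => (Finset.mem_Iic.1 ha) j)
  omega

/-- number of coordinates with value at least `k` -/
def ckFn {r : ℕ} (M : Fin r → ℕ) (k : ℕ) : ℕ := (Finset.univ.filter fun j => k ≤ M j).card

lemma mem_iff_lt_card_of_downclosed {r : ℕ} (s : Finset (Fin r))
    (hdc : ∀ j1 j2 : Fin r, j1 ≤ j2 → j2 ∈ s → j1 ∈ s) (j : Fin r) :
    j ∈ s ↔ (j : ℕ) < s.card := by
  constructor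
  · intro hj
    have hsub : Finset.Iic j ⊆ s := fun i hi => hdc i j (Finset.mem_Iic.1 hi) hj
    have hc := Finset.card_le_card hsub
    rw [Fin.card_Iic] at hc
    omega
  · intro hc
    by_contra hj
    have hsub : s ⊆ Finset.Iio j := by
      intro i hi
      rw [Finset.mem_Iio]
      by_contra hlt
      exact hj (hdc j i (not_lt.mp hlt) hi)
    have := Finset.card_le_card hsub
    rw [Fin.card_Iio] at this
    omega

lemma le_iff_lt_ck {r : ℕ} {M : Fin r → ℕ} (hM : Antitone M) (k : ℕ) (j : Fin r) :
    k ≤ M j ↔ (j : ℕ) < ckFn M k := by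
  have := mem_iff_lt_card_of_downclosed (Finset.univ.filter fun j => k ≤ M j)
    (fun j1 j2 h12 h2 => by
      simp only [Finset.mem_filter, Finset.mem_univ, true_and] at h2 ⊢
      exact le_trans h2 (hM h12)) j
  simpa [ckFn] using this

lemma min_eq_of_ck_eq {r : ℕ} {M N : Fin r → ℕ} (hM : Antitone M) (hN : Antitone N) (k : ℕ)
    (h : ∀ i, 1 ≤ i → i ≤ k → ckFn M i = ckFn N i) (j : Fin r) :
    min (M j) k = min (N j) k := by
  have key : ∀ (P : Fin r → ℕ), Antitone P →
      min (P j) k = ((Finset.Icc 1 k).filter fun i => (j : ℕ) < ckFn P i).card := by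
    intro P hP
    have hfe : ((Finset.Icc 1 k).filter fun i => (j : ℕ) < ckFn P i)
        = Finset.Icc 1 (min (P j) k) := by
      ext i
      simp only [Finset.mem_filter, Finset.mem_Icc]
      constructor
      · rintro ⟨⟨h1, h2⟩, h3⟩
        have := (le_iff_lt_ck hP i j).mpr h3
        omega
      · rintro ⟨h1, h2⟩
        exact ⟨⟨h1, by omega⟩, (le_iff_lt_ck hP i j).mp (by omega)⟩
    rw [hfe, Nat.card_Icc]
    omega
  rw [key M hM, key N hN]
  congr 1
  apply Finset.filter_congr
  intro i hi
  simp only [Finset.mem_Icc] at hi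
  rw [h i hi.1 hi.2]

lemma cntFn_split {r : ℕ} (M : Fin r → ℕ) {k : ℕ} (hk : 1 ≤ k) :
    cntFn M k = cntFn (fun j => min (M j) (k - 1)) k + ckFn M k := by
  classical
  have hA : ((Finset.Iic M).filter fun a => monDeg a = k)
      = ((Finset.Iic fun j => min (M j) (k - 1)).filter fun a => monDeg a = k)
        ∪ (Finset.univ.filter fun j => k ≤ M j).image (fun j => Pi.single j k) := by
    ext a
    simp only [Finset.mem_union, Finset.mem_filter, Finset.mem_Iic, Finset.mem_image,
      Finset.mem_univ, true_and]
    constructor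
    · rintro ⟨hle, hdeg⟩
      by_cases hcon : ∃ j, a = Pi.single j k
      · right
        obtain ⟨j, rfl⟩ := hcon
        refine ⟨j, ?_, rfl⟩
        have := hle j
        rwa [Pi.single_eq_same] at this
      · left
        refine ⟨?_, hdeg⟩
        intro j
        show a j ≤ min (M j) (k - 1)
        by_contra hbad
        have h1 : a j ≤ M j := hle j
        have h2 : k ≤ a j := by omega
        have h3 : a j ≤ monDeg a :=
          Finset.single_le_sum (fun i _ => Nat.zero_le _) (Finset.mem_univ j)
        have haj : a j = k := by omega
        have := eq_single_of_deg_le (a := a) (j := j) (by omega)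
        rw [haj] at this
        exact hcon ⟨j, this⟩
    · rintro (⟨hle, hdeg⟩ | ⟨j, hj, rfl⟩)
      · exact ⟨fun j => le_trans (hle j) (min_le_left _ _), hdeg⟩
      · refine ⟨?_, monDeg_single j k⟩
        intro j'
        rcases eq_or_ne j' j with rfl | hne
        · simpa using hj
        · rw [Pi.single_eq_of_ne hne]; exact Nat.zero_le _
  have hdisj : Disjoint ((Finset.Iic fun j => min (M j) (k - 1)).filter fun a => monDeg a = k)
      ((Finset.univ.filter fun j => k ≤ M j).image (fun j => Pi.single j k)) := by
    rw [Finset.disjoint_left]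
    intro a ha hb
    simp only [Finset.mem_filter, Finset.mem_Iic] at ha
    simp only [Finset.mem_image, Finset.mem_filter, Finset.mem_univ, true_and] at hb
    obtain ⟨j, hj, rfl⟩ := hb
    have h1 : (Pi.single j k : Fin r → ℕ) j ≤ min (M j) (k - 1) := by exact ha.1 j
    rw [Pi.single_eq_same] at h1
    have h2 := min_le_right (M j) (k - 1)
    omega
  have hcard : ((Finset.univ.filter fun j => k ≤ M j).image (fun j => Pi.single j k)).card
      = ckFn M k := by
    rw [Finset.card_image_of_injOn]
    · rfl
    · intro j₁ _ j₂ _ heq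
      by_contra hne
      have h1 : (Pi.single j₁ k : Fin r → ℕ) j₁ = (Pi.single j₂ k : Fin r → ℕ) j₁ := by exact congrFun heq j₁
      rw [Pi.single_eq_same, Pi.single_eq_of_ne (fun h => hne h)] at h1
      omega
  show ((Finset.Iic M).filter fun a => monDeg a = k).card = _
  rw [hA, Finset.card_union_of_disjoint hdisj, hcard]
  rfl

lemma ck_eq_of_cnt_eq {r : ℕ} {M N : Fin r → ℕ} (hM : Antitone M) (hN : Antitone N)
    (h : cntFn M = cntFn N) : ∀ k, 1 ≤ k → ckFn M k = ckFn N k := by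
  intro k
  induction k using Nat.strong_induction_on with
  | _ k ih =>
    intro hk
    have hmin : (fun j => min (M j) (k - 1)) = (fun j => min (N j) (k - 1)) := by
      funext j
      exact min_eq_of_ck_eq hM hN (k - 1) (fun i h1 h2 => ih i (by omega) h1) j
    have h1 := cntFn_split M hk
    have h2 := cntFn_split N hk
    rw [h, hmin] at h1
    omega

lemma antitone_eq_of_cnt_eq {r : ℕ} {M N : Fin r → ℕ} (hM : Antitone M) (hN : Antitone N)
    (h : cntFn M = cntFn N) : M = N := by
  funext j
  have := min_eq_of_ck_eq hM hN (max (M j) (N j))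
    (fun i h1 _ => ck_eq_of_cnt_eq hM hN h i h1) j
  omega


lemma maxMon_Iic {r : ℕ} (M : Fin r → ℕ) :
    {N : Fin r → ℕ | IsMaxMon (Finset.Iic M) N} = {M} := by
  ext N
  simp only [Set.mem_setOf_eq, Set.mem_singleton_iff]
  constructor
  · rintro ⟨hN, hmax⟩
    exact (hmax M (Finset.mem_Iic.2 le_rfl) (fun j => by exact Finset.mem_Iic.1 hN j)).symm
  · rintro rfl
    exact ⟨Finset.mem_Iic.2 le_rfl,
      fun N hN h => le_antisymm (Finset.mem_Iic.1 hN) (by exact h)⟩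

lemma pure_Iic {r e : ℕ} (M : Fin r → ℕ) (hdeg : monDeg M = e) :
    IsPureWithSocle (Finset.Iic M) e := by
  refine ⟨⟨⟨M, Finset.mem_Iic.2 le_rfl⟩, ?_⟩, ?_, ⟨M, Finset.mem_Iic.2 le_rfl, hdeg⟩, ?_⟩
  · intro N hN a ha
    exact Finset.mem_Iic.2 (le_trans (by exact ha) (Finset.mem_Iic.1 hN))
  · intro N hN
    rw [← hdeg]
    exact monDeg_le_monDeg (fun j => by exact Finset.mem_Iic.1 hN j)
  · intro N hN
    have hNM : N ∈ ({M} : Set (Fin r → ℕ)) := by rw [← maxMon_Iic M]; exact hN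
    rw [hNM]; exact hdeg

lemma orderIdeal_eq_Iic {r e : ℕ} {X : Finset (Fin r → ℕ)} {M : Fin r → ℕ}
    (hX : IsPureWithSocle X e) (hM : {N : Fin r → ℕ | IsMaxMon X N} = {M}) :
    X = Finset.Iic M := by
  obtain ⟨⟨hne, hdown⟩, hle, hex, hmax⟩ := hX
  have hMmem : IsMaxMon X M := by
    have : M ∈ ({M} : Set (Fin r → ℕ)) := rfl
    rw [← hM] at this
    exact this
  ext a
  rw [Finset.mem_Iic]
  constructor
  · intro ha
    obtain ⟨N, hN, hNmax⟩ := Finset.exists_max_image (X.filter fun b => ∀ j, a j ≤ b j) monDeg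
      ⟨a, Finset.mem_filter.2 ⟨ha, fun j => le_rfl⟩⟩
    rw [Finset.mem_filter] at hN
    have hNm : IsMaxMon X N := by
      refine ⟨hN.1, fun N' hN' hle' => ?_⟩
      have hN'f : N' ∈ X.filter fun b => ∀ j, a j ≤ b j :=
        Finset.mem_filter.2 ⟨hN', fun j => le_trans (hN.2 j) (hle' j)⟩
      exact (eq_of_le_of_deg_ge hle' (hNmax _ hN'f)).symm
    have hNM : N = M := by
      have : N ∈ ({M} : Set (Fin r → ℕ)) := by rw [← hM]; exact hNm
      exact this
    exact fun j => hNM ▸ hN.2 j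
  · intro haM
    exact hdown M hMmem.1 a (fun j => by exact haM j)

/-- the weakly decreasing enumeration of a multiset, as a function on `Fin r` -/
def sFun (m : Multiset ℕ) (r : ℕ) : Fin r → ℕ := fun j => (Multiset.sort m (· ≥ ·)).getD j 0

lemma sFun_antitone (m : Multiset ℕ) (r : ℕ) (h : Multiset.card m = r) :
    Antitone (sFun m r) := by
  intro j1 j2 hle
  have hlen : (Multiset.sort m (· ≥ ·)).length = r := by rw [Multiset.length_sort, h]
  show (Multiset.sort m (· ≥ ·)).getD j2 0 ≤ (Multiset.sort m (· ≥ ·)).getD j1 0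
  rw [List.getD_eq_getElem _ _ (by rw [hlen]; exact j2.isLt),
      List.getD_eq_getElem _ _ (by rw [hlen]; exact j1.isLt)]
  have := (Multiset.pairwise_sort m (· ≥ ·)).rel_get_of_le
    (a := ⟨j1, by rw [hlen]; exact j1.isLt⟩) (b := ⟨j2, by rw [hlen]; exact j2.isLt⟩)
    (by exact hle)
  simpa using this

lemma ofFn_sFun (m : Multiset ℕ) (r : ℕ) (h : Multiset.card m = r) :
    List.ofFn (sFun m r) = Multiset.sort m (· ≥ ·) := by
  have hlen : (Multiset.sort m (· ≥ ·)).length = r := by rw [Multiset.length_sort, h]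
  apply List.ext_getElem
  · rw [List.length_ofFn, hlen]
  · intro i h1 h2
    rw [List.getElem_ofFn]
    show (Multiset.sort m (· ≥ ·)).getD _ 0 = _
    rw [List.getD_eq_getElem _ _ h2]

/-- the multiset of nonzero exponents -/
def posParts {r : ℕ} (M : Fin r → ℕ) : Multiset ℕ :=
  Multiset.filter (fun x => x ≠ 0) ((List.ofFn M : List ℕ) : Multiset ℕ)

lemma posParts_eq_coe {r : ℕ} (M : Fin r → ℕ) :
    posParts M = (((List.ofFn M).filter (fun x => decide (x ≠ 0)) : List ℕ) : Multiset ℕ) := by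
  simp [posParts]

lemma posParts_pos {r : ℕ} (M : Fin r → ℕ) : ∀ x ∈ posParts M, 0 < x := by
  intro x hx
  rw [posParts, Multiset.mem_filter] at hx
  omega

lemma posParts_sum {r : ℕ} (M : Fin r → ℕ) : (posParts M).sum = monDeg M := by
  have hsplit := Multiset.filter_add_not (fun x => x ≠ 0) ((List.ofFn M : List ℕ) : Multiset ℕ)
  have hzero : (Multiset.filter (fun x => ¬ x ≠ 0) ((List.ofFn M : List ℕ) : Multiset ℕ)).sum = 0 :=
    Multiset.sum_eq_zero (fun x hx => by rw [Multiset.mem_filter] at hx; omega)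
  have := congrArg Multiset.sum hsplit
  rw [Multiset.sum_add, hzero] at this
  rw [posParts]
  rw [add_zero] at this
  rw [this, Multiset.sum_coe, List.sum_ofFn]
  rfl

lemma posParts_card {r : ℕ} (M : Fin r → ℕ) :
    Multiset.card (posParts M) = cntFn M 1 := by
  rw [cntFn_one]
  rw [posParts, ← Fin.univ_val_map, Multiset.filter_map, Multiset.card_map]
  have : (Finset.univ.filter fun j => 1 ≤ M j).card
      = Multiset.card (Multiset.filter (fun j => 1 ≤ M j) Finset.univ.val) := rfl
  rw [this]
  congr 1
  apply Multiset.filter_congr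
  intro j _
  show ((fun x => x ≠ 0) ∘ M) j ↔ 1 ≤ M j
  simp only [Function.comp_apply]
  omega

lemma cntFn_eq_of_posParts {r1 r2 : ℕ} (M : Fin r1 → ℕ) (N : Fin r2 → ℕ)
    (h : posParts M = posParts N) : cntFn M = cntFn N := by
  rw [cntFn_eq_hseq, cntFn_eq_hseq, hseq_filter (List.ofFn M), hseq_filter (List.ofFn N)]
  apply hseq_perm
  rw [← Multiset.coe_eq_coe, ← posParts_eq_coe, ← posParts_eq_coe]
  exact h

lemma posParts_sFun (m : Multiset ℕ) (r : ℕ) (hc : Multiset.card m = r)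
    (hpos : ∀ x ∈ m, 0 < x) : posParts (sFun m r) = m := by
  rw [posParts, ofFn_sFun m r hc, Multiset.sort_eq]
  rw [Multiset.filter_eq_self]
  intro x hx
  have := hpos x hx
  omega



/-- The number of pure O-sequences of codimension `r`, socle degree
`e` and type 1 equals the number of partitions of `e` into exactly `r` (positive)
parts. -/
theorem pure_type_one_count_eq_partitions (r e : ℕ) (hr : 0 < r) (he : 0 < e) :
    {h : ℕ → ℕ | IsPureOSeqOfType h e 1 ∧ h 1 = r ∧ ∀ i, e < i → h i = 0}.ncard =
      (Finset.univ.filter fun p : Nat.Partition e =>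
        Multiset.card p.parts = r).card := by
  classical
  have key : {h : ℕ → ℕ | IsPureOSeqOfType h e 1 ∧ h 1 = r ∧ ∀ i, e < i → h i = 0}
      = ↑((Finset.univ.filter fun p : Nat.Partition e => Multiset.card p.parts = r).image
          (fun p => cntFn (sFun p.parts r))) := by
    ext h
    simp only [Set.mem_setOf_eq, Finset.coe_image, Set.mem_image, Finset.mem_coe,
      Finset.mem_filter, Finset.mem_univ, true_and]
    constructor
    · rintro ⟨⟨r', X, hpure, hvec, htype⟩, h1, hvanish⟩
      obtain ⟨M, hMeq⟩ := Set.ncard_eq_one.mp htype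
      have hXI : X = Finset.Iic M := orderIdeal_eq_Iic hpure hMeq
      have hMmem : IsMaxMon X M := by
        have : M ∈ ({M} : Set (Fin r' → ℕ)) := rfl
        rw [← hMeq] at this; exact this
      have hMdeg : monDeg M = e := hpure.2.2.2 M hMmem
      have hh : h = cntFn M := by
        funext i
        rcases le_or_gt i e with hie | hie
        · rw [hvec i hie, hXI]; rfl
        · rw [hvanish i hie, cntFn_vanish M (by omega)]
      have hr' : cntFn M 1 = r := by rw [← hh]; exact h1
      refine ⟨⟨posParts M, fun {x} hx => posParts_pos M x hx, by rw [posParts_sum, hMdeg]⟩,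
        ?_, ?_⟩
      · show Multiset.card (posParts M) = r
        rw [posParts_card]; exact hr'
      · show cntFn (sFun (posParts M) r) = h
        rw [hh]
        apply cntFn_eq_of_posParts
        exact posParts_sFun (posParts M) r (by rw [posParts_card]; exact hr') (posParts_pos M)
    · rintro ⟨p, hp, rfl⟩
      have hMdeg : monDeg (sFun p.parts r) = e := by
        have h1 : monDeg (sFun p.parts r) = (List.ofFn (sFun p.parts r)).sum := by
          rw [List.sum_ofFn]; rfl
        rw [h1, ofFn_sFun p.parts r hp]
        have h2 := congrArg Multiset.sum (Multiset.sort_eq p.parts (· ≥ ·))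
        rw [Multiset.sum_coe] at h2
        rw [h2, p.parts_sum]
      refine ⟨⟨r, Finset.Iic (sFun p.parts r), pure_Iic _ hMdeg, fun i _ => rfl, ?_⟩, ?_, ?_⟩
      · rw [maxMon_Iic]; exact Set.ncard_singleton _
      · rw [cntFn_one]
        have hall : ∀ j : Fin r, 1 ≤ sFun p.parts r j := by
          intro j
          have hlen : (Multiset.sort p.parts (· ≥ ·)).length = r := by
            rw [Multiset.length_sort, hp]
          have hmem : sFun p.parts r j ∈ Multiset.sort p.parts (· ≥ ·) := by
            show (Multiset.sort p.parts (· ≥ ·)).getD j 0 ∈ _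
            rw [List.getD_eq_getElem _ _ (by rw [hlen]; exact j.isLt)]
            exact List.getElem_mem _
          exact p.parts_pos ((Multiset.mem_sort _).mp hmem)
        rw [Finset.filter_true_of_mem (fun j _ => hall j), Finset.card_univ, Fintype.card_fin]
      · intro i hi
        exact cntFn_vanish _ (by omega)
  rw [key, Set.ncard_coe_finset]
  apply Finset.card_image_of_injOn
  intro p hp q hq hpq
  simp only [Finset.coe_filter, Set.mem_setOf_eq, Finset.mem_univ, true_and] at hp hq
  have heq := antitone_eq_of_cnt_eq (sFun_antitone p.parts r hp) (sFun_antitone q.parts r hq) hpq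
  apply Nat.Partition.ext
  have h2 := congrArg List.ofFn heq
  rw [ofFn_sFun p.parts r hp, ofFn_sFun q.parts r hq] at h2
  have h3 := congrArg (fun L : List ℕ => (L : Multiset ℕ)) h2
  simpa [Multiset.sort_eq] using h3
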